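/- b_n = ∑ over set partitions π of [n] of p_{|π|}, where |π| is the number of blocks of π; equivalently b_n = ∑_{k=1}^n S(n,k)·p_k for n ≥ 1, where S(n,k) is the Stirling number of the second kind. -/

import Mathlib

def prefixUnion (n : ℕ) (L : List (Finset (Fin n))) (i : ℕ) : Finset (Fin n) :=
  (L.take (i + 1)).foldr (· ∪ ·) ∅

def IsOP (n : ℕ) (L : List (Finset (Fin n))) : Prop :=
  (∀ A ∈ L, A.Nonempty) ∧ L.Pairwise Disjoint ∧ L.foldr (· ∪ ·) ∅ = Finset.univ

def OddMinima (n : ℕ) (L : List (Finset (Fin n))) : Prop :=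
  ∀ i, i < L.length → ∀ m : Fin n,
    (m ∈ prefixUnion n L i ∧ ∀ x ∈ prefixUnion n L i, m ≤ x) →
    ∃ j, ∃ hj : j < L.length, Even j ∧ m ∈ L.get ⟨j, hj⟩

/-- The number of ordered partitions of `[n]` with all left-to-right minima
at odd locations. -/
noncomputable def bseq (n : ℕ) : ℕ :=
  Nat.card {L : List (Finset (Fin n)) // IsOP n L ∧ OddMinima n L}

def lrmOddPerm (n : ℕ) (a : Equiv.Perm (Fin n)) : Prop :=
  ∀ i : Fin n, (∀ j : Fin n, j ≤ i → a i ≤ a j) → Odd (i.val + 1)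

/-- The number of permutations of `[k]` with all left-to-right minima at odd
positions. -/
noncomputable def permCount (n : ℕ) : ℕ :=
  Nat.card {a : Equiv.Perm (Fin n) // lrmOddPerm n a}

/-- `π` is a set partition of `[n]`. -/
def IsSetPartition (n : ℕ) (π : Finset (Finset (Fin n))) : Prop :=
  (∀ A ∈ π, A.Nonempty) ∧ (∀ A ∈ π, ∀ B ∈ π, A ≠ B → Disjoint A B) ∧
    π.sup id = Finset.univ

/-- The Stirling number of the second kind: the number of set partitions of
`[n]` into `k` blocks. -/
noncomputable def stirling2 (n k : ℕ) : ℕ :=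
  Nat.card {π : Finset (Finset (Fin n)) // IsSetPartition n π ∧ π.card = k}

namespace BP

open Finset

variable {n : ℕ}

theorem mem_foldr_union {x : Fin n} {l : List (Finset (Fin n))} :
    x ∈ l.foldr (· ∪ ·) ∅ ↔ ∃ A ∈ l, x ∈ A := by
  induction l with
  | nil => simp
  | cons A l ih => simp [ih]

theorem mem_prefixUnion {x : Fin n} {L : List (Finset (Fin n))} {i : ℕ} :
    x ∈ prefixUnion n L i ↔ ∃ j, ∃ hj : j < L.length, j ≤ i ∧ x ∈ L.get ⟨j, hj⟩ := by
  rw [prefixUnion, mem_foldr_union]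
  constructor
  · rintro ⟨A, hA, hx⟩
    rw [List.mem_take_iff_getElem] at hA
    obtain ⟨j, hj, rfl⟩ := hA
    exact ⟨j, (lt_min_iff.mp hj).2, by omega, by simpa using hx⟩
  · rintro ⟨j, hj, hji, hx⟩
    refine ⟨L.get ⟨j, hj⟩, ?_, hx⟩
    rw [List.mem_take_iff_getElem]
    exact ⟨j, lt_min_iff.mpr ⟨by omega, hj⟩, rfl⟩

section Part

variable (π : Finset (Finset (Fin n)))

theorem existsUnique_block (hπ : IsSetPartition n π) (x : Fin n) :
    ∃! B, B ∈ π ∧ x ∈ B := by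
  have hx : x ∈ π.sup id := hπ.2.2 ▸ mem_univ x
  rw [Finset.mem_sup] at hx
  obtain ⟨B, hB, hxB⟩ := hx
  refine ⟨B, ⟨hB, hxB⟩, ?_⟩
  rintro C ⟨hC, hxC⟩
  by_contra hne
  exact Finset.disjoint_left.mp (hπ.2.1 C hC B hB hne) hxC hxB

noncomputable def blockOf (hπ : IsSetPartition n π) (x : Fin n) : Finset (Fin n) :=
  π.choose (fun B => x ∈ B) (existsUnique_block π hπ x)

theorem blockOf_mem (hπ : IsSetPartition n π) (x : Fin n) : blockOf π hπ x ∈ π :=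
  Finset.choose_mem _ _ _

theorem mem_blockOf (hπ : IsSetPartition n π) (x : Fin n) : x ∈ blockOf π hπ x := by
  unfold blockOf
  exact Finset.choose_property (fun B => x ∈ B) π (existsUnique_block π hπ x)

theorem blockOf_eq (hπ : IsSetPartition n π) {x : Fin n} {B : Finset (Fin n)}
    (hB : B ∈ π) (hx : x ∈ B) : blockOf π hπ x = B :=
  (existsUnique_block π hπ x).unique ⟨blockOf_mem π hπ x, mem_blockOf π hπ x⟩ ⟨hB, hx⟩

noncomputable def Mins (hπ : IsSetPartition n π) : Finset (Fin n) :=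
  univ.filter (fun x => ∀ y ∈ blockOf π hπ x, x ≤ y)

theorem min'_mem_Mins (hπ : IsSetPartition n π) {B : Finset (Fin n)} (hB : B ∈ π)
    (hBne : B.Nonempty) : B.min' hBne ∈ Mins π hπ := by
  rw [Mins, mem_filter]
  refine ⟨mem_univ _, ?_⟩
  rw [blockOf_eq π hπ hB (B.min'_mem hBne)]
  exact fun y hy => B.min'_le y hy

theorem eq_min'_of_mem_Mins (hπ : IsSetPartition n π) {x : Fin n} (hx : x ∈ Mins π hπ)
    (h : (blockOf π hπ x).Nonempty) : (blockOf π hπ x).min' h = x := by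
  rw [Mins, mem_filter] at hx
  exact le_antisymm (Finset.min'_le _ _ (mem_blockOf π hπ x))
    (hx.2 _ (Finset.min'_mem _ _))

theorem card_Mins (hπ : IsSetPartition n π) : (Mins π hπ).card = π.card := by
  refine Finset.card_bij' (fun x _ => blockOf π hπ x)
    (fun B hB => B.min' (hπ.1 B hB)) ?_ ?_ ?_ ?_
  · intro x hx
    exact blockOf_mem π hπ x
  · intro B hB
    exact min'_mem_Mins π hπ hB (hπ.1 B hB)
  · intro x hx
    exact eq_min'_of_mem_Mins π hπ hx _
  · intro B hB
    exact blockOf_eq π hπ hB (B.min'_mem _)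

noncomputable def e0 (hπ : IsSetPartition n π) : Fin π.card ≃o (Mins π hπ) :=
  (Mins π hπ).orderIsoOfFin (card_Mins π hπ)

noncomputable def eB (hπ : IsSetPartition n π) : Fin π.card ≃ {B // B ∈ π} where
  toFun i := ⟨blockOf π hπ (e0 π hπ i), blockOf_mem π hπ _⟩
  invFun B := (e0 π hπ).symm ⟨B.1.min' (hπ.1 B.1 B.2), min'_mem_Mins π hπ B.2 _⟩
  left_inv i := by
    dsimp only
    have h1 : (blockOf π hπ ((e0 π hπ i : Fin n))).Nonempty :=
      hπ.1 _ (blockOf_mem π hπ _)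
    have h2 := eq_min'_of_mem_Mins π hπ (e0 π hπ i).2 h1
    have h3 : (⟨(blockOf π hπ ((e0 π hπ i : Fin n))).min' h1,
        min'_mem_Mins π hπ (blockOf_mem π hπ _) h1⟩ : (Mins π hπ)) = e0 π hπ i :=
      Subtype.ext h2
    rw [h3]
    exact (e0 π hπ).symm_apply_apply i
  right_inv B := by
    ext1
    dsimp only
    have h4 : ((e0 π hπ) ((e0 π hπ).symm ⟨B.1.min' (hπ.1 B.1 B.2),
        min'_mem_Mins π hπ B.2 _⟩) : Fin n) = B.1.min' (hπ.1 B.1 B.2) := by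
      rw [(e0 π hπ).apply_symm_apply]
    rw [h4]
    exact blockOf_eq π hπ B.2 (B.1.min'_mem _)

theorem e0_mem_eB (hπ : IsSetPartition n π) (i : Fin π.card) :
    (e0 π hπ i : Fin n) ∈ (eB π hπ i : Finset (Fin n)) :=
  mem_blockOf π hπ _

theorem e0_le_of_mem_eB (hπ : IsSetPartition n π) (i : Fin π.card) {y : Fin n}
    (hy : y ∈ (eB π hπ i : Finset (Fin n))) : (e0 π hπ i : Fin n) ≤ y := by
  have := (e0 π hπ i).2
  unfold Mins at this
  rw [mem_filter] at this
  exact this.2 y hy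

theorem e0_le_e0_iff (hπ : IsSetPartition n π) {i j : Fin π.card} :
    (e0 π hπ i : Fin n) ≤ (e0 π hπ j : Fin n) ↔ i ≤ j := by
  rw [Subtype.coe_le_coe]
  exact (e0 π hπ).le_iff_le

noncomputable def Lof (hπ : IsSetPartition n π) (a : Equiv.Perm (Fin π.card)) :
    List (Finset (Fin n)) :=
  List.ofFn (fun i => (eB π hπ (a i) : Finset (Fin n)))

@[simp] theorem length_Lof (hπ : IsSetPartition n π) (a : Equiv.Perm (Fin π.card)) :
    (Lof π hπ a).length = π.card := by simp [Lof]

theorem get_Lof (hπ : IsSetPartition n π) (a : Equiv.Perm (Fin π.card)) (j : ℕ)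
    (hj : j < (Lof π hπ a).length) :
    (Lof π hπ a).get ⟨j, hj⟩ =
      (eB π hπ (a ⟨j, by simpa using hj⟩) : Finset (Fin n)) := by
  simp [Lof, List.get_ofFn]

theorem eB_coe_inj (hπ : IsSetPartition n π) {i j : Fin π.card}
    (h : (eB π hπ i : Finset (Fin n)) = (eB π hπ j : Finset (Fin n))) : i = j :=
  (eB π hπ).injective (Subtype.ext h)

theorem isOP_Lof (hπ : IsSetPartition n π) (a : Equiv.Perm (Fin π.card)) :
    IsOP n (Lof π hπ a) := by
  refine ⟨?_, ?_, ?_⟩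
  · intro A hA
    rw [Lof, List.mem_ofFn] at hA
    obtain ⟨i, rfl⟩ := hA
    exact hπ.1 _ (eB π hπ (a i)).2
  · rw [List.pairwise_iff_get]
    intro i j hij
    rw [get_Lof, get_Lof]
    refine hπ.2.1 _ (eB π hπ _).2 _ (eB π hπ _).2 ?_
    intro h
    have := a.injective (eB_coe_inj π hπ h)
    simp only [Fin.mk.injEq, Fin.ext_iff] at this
    omega
  · ext x
    simp only [mem_foldr_union, mem_univ, iff_true]
    have hb := blockOf_mem π hπ x
    set i : Fin π.card := a.symm ((eB π hπ).symm ⟨blockOf π hπ x, hb⟩) with hi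
    refine ⟨(eB π hπ (a i) : Finset (Fin n)), ?_, ?_⟩
    · rw [Lof, List.mem_ofFn]
      exact ⟨i, rfl⟩
    · rw [hi, a.apply_symm_apply, (eB π hπ).apply_symm_apply]
      exact mem_blockOf π hπ x

theorem toFinset_Lof (hπ : IsSetPartition n π) (a : Equiv.Perm (Fin π.card)) :
    (Lof π hπ a).toFinset = π := by
  ext A
  rw [List.mem_toFinset, Lof, List.mem_ofFn]
  constructor
  · rintro ⟨i, rfl⟩
    exact (eB π hπ (a i)).2
  · intro hA
    exact ⟨a.symm ((eB π hπ).symm ⟨A, hA⟩), by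
      simp only [a.apply_symm_apply, (eB π hπ).apply_symm_apply]⟩

theorem oddMinima_Lof_iff (hπ : IsSetPartition n π) (a : Equiv.Perm (Fin π.card)) :
    OddMinima n (Lof π hπ a) ↔ lrmOddPerm π.card a := by
  constructor
  · intro h i hi
    -- m := e0 (a i) is the min of prefixUnion at i
    set m : Fin n := (e0 π hπ (a i) : Fin n) with hm
    have him : (i : ℕ) < (Lof π hπ a).length := by simpa using i.isLt
    have hmem : m ∈ prefixUnion n (Lof π hπ a) i := by
      rw [mem_prefixUnion]
      refine ⟨i, him, le_refl _, ?_⟩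
      rw [get_Lof]
      exact e0_mem_eB π hπ (a i)
    have hmin : ∀ x ∈ prefixUnion n (Lof π hπ a) i, m ≤ x := by
      intro x hx
      rw [mem_prefixUnion] at hx
      obtain ⟨j, hj, hji, hxj⟩ := hx
      rw [get_Lof] at hxj
      set j' : Fin π.card := ⟨j, by simpa using hj⟩ with hj'
      have h1 : a i ≤ a j' := hi j' (by rw [Fin.le_def]; exact hji)
      calc m ≤ (e0 π hπ (a j') : Fin n) := (e0_le_e0_iff π hπ).mpr h1
        _ ≤ x := e0_le_of_mem_eB π hπ _ hxj
    obtain ⟨j, hj, hje, hmj⟩ := h i him m ⟨hmem, hmin⟩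
    rw [get_Lof] at hmj
    set j' : Fin π.card := ⟨j, by simpa using hj⟩ with hj'
    -- m is in block eB (a j') and in block eB (a i); so they coincide
    have hsame : (eB π hπ (a j') : Finset (Fin n)) = (eB π hπ (a i) : Finset (Fin n)) := by
      by_contra hne
      have hd := hπ.2.1 _ (eB π hπ (a j')).2 _ (eB π hπ (a i)).2 hne
      exact Finset.disjoint_left.mp hd hmj (e0_mem_eB π hπ (a i))
    have : j' = i := a.injective (eB_coe_inj π hπ hsame)
    have hje' : Even (i : ℕ) := by
      rw [← this]
      simpa [hj'] using hje
    exact Nat.odd_add_one.mpr (Nat.not_odd_iff_even.mpr hje')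
  · rintro h i hi m ⟨hmem, hmin⟩
    have hik : i < π.card := by simpa using hi
    set S : Finset (Fin π.card) := univ.filter (fun j => (j : ℕ) ≤ i) with hS
    have hSne : S.Nonempty := ⟨⟨i, hik⟩, by simp [hS]⟩
    obtain ⟨j0, hj0S, hj0⟩ := S.exists_min_image a hSne
    have hj0i : (j0 : ℕ) ≤ i := by
      rw [hS, mem_filter] at hj0S
      exact hj0S.2
    have hj0len : (j0 : ℕ) < (Lof π hπ a).length := by simpa using j0.isLt
    have hmemj0 : (e0 π hπ (a j0) : Fin n) ∈ prefixUnion n (Lof π hπ a) i := by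
      rw [mem_prefixUnion]
      refine ⟨j0, hj0len, hj0i, ?_⟩
      rw [get_Lof]
      exact e0_mem_eB π hπ (a j0)
    have hle1 : m ≤ (e0 π hπ (a j0) : Fin n) := hmin _ hmemj0
    have hle2 : (e0 π hπ (a j0) : Fin n) ≤ m := by
      rw [mem_prefixUnion] at hmem
      obtain ⟨j, hj, hji, hmj⟩ := hmem
      rw [get_Lof] at hmj
      set j' : Fin π.card := ⟨j, by simpa using hj⟩ with hj'
      have hj'S : j' ∈ S := by simp [hS, hj', hji]
      calc (e0 π hπ (a j0) : Fin n) ≤ (e0 π hπ (a j') : Fin n) :=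
            (e0_le_e0_iff π hπ).mpr (hj0 j' hj'S)
        _ ≤ m := e0_le_of_mem_eB π hπ _ hmj
    have hmeq : m = (e0 π hπ (a j0) : Fin n) := le_antisymm hle1 hle2
    have hlrm : ∀ j : Fin π.card, j ≤ j0 → a j0 ≤ a j := by
      intro j hj
      refine hj0 j ?_
      rw [hS, mem_filter]
      exact ⟨mem_univ _, le_trans (by exact_mod_cast hj) hj0i⟩
    have hodd := h j0 hlrm
    refine ⟨j0, hj0len, Nat.not_odd_iff_even.mp (Nat.odd_add_one.mp hodd), ?_⟩
    rw [get_Lof, hmeq]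
    exact e0_mem_eB π hπ (a j0)

end Part

theorem nodup_of_isOP {L : List (Finset (Fin n))} (h : IsOP n L) : L.Nodup :=
  List.Pairwise.imp_of_mem (fun {A B} hA _ hd => by
    rintro rfl
    obtain ⟨x, hx⟩ := h.1 A hA
    exact Finset.disjoint_left.mp hd hx hx) h.2.1

theorem toFinset_sup_eq (l : List (Finset (Fin n))) :
    l.toFinset.sup id = l.foldr (· ∪ ·) ∅ := by
  induction l with
  | nil => simp
  | cons A l ih => simp [Finset.sup_insert, ih]

theorem isSP_toFinset {L : List (Finset (Fin n))} (h : IsOP n L) :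
    IsSetPartition n L.toFinset := by
  refine ⟨?_, ?_, ?_⟩
  · intro A hA
    exact h.1 A (List.mem_toFinset.mp hA)
  · intro A hA B hB hne
    exact (letI : Std.Symm (α := Finset (Fin n)) Disjoint := ⟨fun _ _ hd => hd.symm⟩; List.Pairwise.forall h.2.1)
      (List.mem_toFinset.mp hA) (List.mem_toFinset.mp hB) hne
  · rw [toFinset_sup_eq]
    exact h.2.2

abbrev SigmaT (n : ℕ) :=
  Σ π : {π : Finset (Finset (Fin n)) // IsSetPartition n π},
    {a : Equiv.Perm (Fin π.1.card) // lrmOddPerm π.1.card a}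

noncomputable def pack (n : ℕ) : SigmaT n →
    {L : List (Finset (Fin n)) // IsOP n L ∧ OddMinima n L} :=
  fun x => ⟨Lof x.1.1 x.1.2 x.2.1,
    isOP_Lof x.1.1 x.1.2 x.2.1, (oddMinima_Lof_iff x.1.1 x.1.2 x.2.1).mpr x.2.2⟩

theorem pack_injective (n : ℕ) : Function.Injective (pack n) := by
  rintro ⟨⟨π1, h1⟩, a1, ha1⟩ ⟨⟨π2, h2⟩, a2, ha2⟩ hxy
  have hval : Lof π1 h1 a1 = Lof π2 h2 a2 := congrArg Subtype.val hxy
  have hπ : π1 = π2 := by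
    rw [← toFinset_Lof π1 h1 a1, ← toFinset_Lof π2 h2 a2, hval]
  subst hπ
  have ha : a1 = a2 := by
    apply Equiv.ext
    intro i
    refine eB_coe_inj π1 h1 ?_
    have := congrFun (List.ofFn_inj.mp hval) i
    exact this
  subst ha
  rfl

theorem pack_surjective (n : ℕ) : Function.Surjective (pack n) := by
  rintro ⟨L, hOP, hOM⟩
  classical
  set π := L.toFinset with hπdef
  have hπ : IsSetPartition n π := isSP_toFinset hOP
  have hnd : L.Nodup := nodup_of_isOP hOP
  have hcard : π.card = L.length := List.toFinset_card_of_nodup hnd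
  set g : Fin π.card → {B // B ∈ π} := fun i =>
    ⟨L.get (Fin.cast hcard i), List.mem_toFinset.mpr (L.get_mem _)⟩ with hg
  have hginj : Function.Injective g := by
    intro i j hij
    have : L.get (Fin.cast hcard i) = L.get (Fin.cast hcard j) :=
      congrArg Subtype.val hij
    have := List.nodup_iff_injective_get.mp hnd this
    exact Fin.ext (by simpa [Fin.ext_iff] using this)
  have hgbij : Function.Bijective g := by
    rw [Fintype.bijective_iff_injective_and_card]
    exact ⟨hginj, by simp [Fintype.card_coe]⟩
  set a : Equiv.Perm (Fin π.card) :=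
    (Equiv.ofBijective g hgbij).trans (eB π hπ).symm with haa
  have heBa : ∀ i, eB π hπ (a i) = g i := by
    intro i
    rw [haa]
    exact (eB π hπ).apply_symm_apply (Equiv.ofBijective g hgbij i)
  have hL : Lof π hπ a = L := by
    apply List.ext_get (by simp [hcard])
    intro i hi1 hi2
    rw [get_Lof]
    have := congrArg Subtype.val (heBa ⟨i, by simpa using hi1⟩)
    exact this
  refine ⟨⟨⟨π, hπ⟩, a, ?_⟩, ?_⟩
  · exact (oddMinima_Lof_iff π hπ a).mp (hL ▸ hOM)
  · exact Subtype.ext hL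

theorem card_le_of_isSP {π : Finset (Finset (Fin n))} (hπ : IsSetPartition n π) :
    π.card ≤ n := by
  classical
  calc π.card = ∑ _B ∈ π, 1 := by rw [Finset.card_eq_sum_ones]
    _ ≤ ∑ B ∈ π, B.card :=
        Finset.sum_le_sum (fun B hB => Finset.card_pos.mpr (hπ.1 B hB))
    _ = (π.biUnion id).card := (Finset.card_biUnion hπ.2.1).symm
    _ = (π.sup id).card := by rw [Finset.sup_eq_biUnion]
    _ = n := by rw [hπ.2.2, Finset.card_univ, Fintype.card_fin]

theorem one_le_card_of_isSP (hn : 1 ≤ n) {π : Finset (Finset (Fin n))}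
    (hπ : IsSetPartition n π) : 1 ≤ π.card := by
  rw [Nat.one_le_iff_ne_zero, Ne, Finset.card_eq_zero]
  rintro rfl
  have := hπ.2.2
  rw [Finset.sup_empty] at this
  have h0 : (⟨0, hn⟩ : Fin n) ∈ (univ : Finset (Fin n)) := mem_univ _
  rw [← this] at h0
  simp at h0

open scoped Classical in
theorem part1 (n : ℕ) : bseq n =
    ∑ π ∈ Finset.univ.filter (fun π => IsSetPartition n π), permCount π.card := by
  classical
  haveI : Fintype {π : Finset (Finset (Fin n)) // IsSetPartition n π} :=
    Fintype.ofFinite _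
  have hbij : Function.Bijective (pack n) := ⟨pack_injective n, pack_surjective n⟩
  rw [bseq, ← Nat.card_eq_of_bijective _ hbij]
  rw [Nat.card_eq_fintype_card, Fintype.card_sigma]
  rw [← Finset.sum_coe_sort (Finset.univ.filter (fun π => IsSetPartition n π))
    (fun π => permCount π.card)]
  refine Fintype.sum_equiv (Equiv.subtypeEquivRight (fun π => by simp)) _ _ ?_
  rintro ⟨π, hπ⟩
  exact (Nat.card_eq_fintype_card).symm

open scoped Classical in
theorem part2 (n : ℕ) (hn : 1 ≤ n) :
    bseq n = ∑ k ∈ Finset.Icc 1 n, stirling2 n k * permCount k := by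
  classical
  rw [part1 n]
  have hmaps : ∀ π ∈ univ.filter (fun π => IsSetPartition n π),
      π.card ∈ Finset.Icc 1 n := by
    intro π hπ
    rw [mem_filter] at hπ
    rw [Finset.mem_Icc]
    exact ⟨one_le_card_of_isSP hn hπ.2, card_le_of_isSP hπ.2⟩
  rw [← Finset.sum_fiberwise_of_maps_to hmaps (fun π => permCount π.card)]
  refine Finset.sum_congr rfl ?_
  intro k _
  have hst : stirling2 n k =
      ((univ.filter (fun π => IsSetPartition n π)).filter
        (fun π => π.card = k)).card := by
    rw [stirling2, Nat.card_eq_fintype_card, Fintype.card_subtype,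
      Finset.filter_filter]
  calc ∑ π ∈ (univ.filter (fun π => IsSetPartition n π)).filter
          (fun π => π.card = k), permCount π.card
      = ∑ _π ∈ (univ.filter (fun π => IsSetPartition n π)).filter
          (fun π => π.card = k), permCount k :=
        Finset.sum_congr rfl (fun π hπ => by rw [(mem_filter.mp hπ).2])
    _ = ((univ.filter (fun π => IsSetPartition n π)).filter
          (fun π => π.card = k)).card * permCount k := by
        rw [Finset.sum_const, smul_eq_mul]
    _ = stirling2 n k * permCount k := by rw [hst]

end BP

open scoped Classical in
/-- `bₙ = ∑_π p_{|π|}` over set partitions `π` of `[n]`; equivalently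
`bₙ = ∑_{k=1}^n S(n,k) pₖ` for `n ≥ 1`. -/
theorem bseq_eq_sum_partitions :
    (∀ n : ℕ, bseq n =
      ∑ π ∈ Finset.univ.filter (fun π => IsSetPartition n π), permCount π.card) ∧
    (∀ n : ℕ, 1 ≤ n →
      bseq n = ∑ k ∈ Finset.Icc 1 n, stirling2 n k * permCount k) := by
  exact ⟨fun n => BP.part1 n, fun n hn => BP.part2 n hn⟩
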